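/- For a UPB with n+1 members in (ℂ²)^{⊗n} (the minimal number for n qubits), the orthogonality graph has exactly one edge of each color at every vertex; consequently, if n is even, no UPB with n+1 members exists in (ℂ²)^{⊗n}. -/

import Mathlib

/-! Auxiliary definitions and lemmas -/

/-- An explicit nonzero vector orthogonal to a given vector in `ℂ²`. -/
noncomputable def orthvec (a : EuclideanSpace ℂ (Fin 2)) : EuclideanSpace ℂ (Fin 2) :=
  (WithLp.equiv 2 (Fin 2 → ℂ)).symm ![-(starRingEnd ℂ) (a 1), (starRingEnd ℂ) (a 0)]

lemma orthvec_inner (a : EuclideanSpace ℂ (Fin 2)) : (inner ℂ (orthvec a) a : ℂ) = 0 := by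
  simp [orthvec, PiLp.inner_apply, Fin.sum_univ_two, RCLike.inner_apply]
  ring

lemma orthvec_ne_zero {a : EuclideanSpace ℂ (Fin 2)} (ha : a ≠ 0) : orthvec a ≠ 0 := by
  intro h
  apply ha
  have h0 := congrArg (fun v => v 0) h
  have h1 := congrArg (fun v => v 1) h
  simp only [orthvec, WithLp.equiv_symm_apply, WithLp.ofLp_toLp, Matrix.cons_val_zero, Matrix.cons_val_one,
    Matrix.head_cons, PiLp.zero_apply, neg_eq_zero, map_eq_zero] at h0 h1
  ext idx
  fin_cases idx <;> simp [h0, h1]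

/-- Two vectors of `ℂ²` orthogonal to the same nonzero vector are parallel. -/
lemma span_dep {a b c : EuclideanSpace ℂ (Fin 2)} (ha : a ≠ 0) (hb : b ≠ 0)
    (hab : (inner ℂ a b : ℂ) = 0) (hac : (inner ℂ a c : ℂ) = 0) : ∃ t : ℂ, t • b = c := by
  have hbK : b ∈ (ℂ ∙ a)ᗮ := Submodule.mem_orthogonal_singleton_iff_inner_right.2 hab
  have hcK : c ∈ (ℂ ∙ a)ᗮ := Submodule.mem_orthogonal_singleton_iff_inner_right.2 hac
  have hdim : Module.finrank ℂ ((ℂ ∙ a)ᗮ : Submodule ℂ (EuclideanSpace ℂ (Fin 2))) = 1 := by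
    have h2 := Submodule.finrank_add_finrank_orthogonal (𝕜 := ℂ) (ℂ ∙ a)
    rw [finrank_span_singleton ha, finrank_euclideanSpace_fin] at h2
    omega
  have hle : (ℂ ∙ b) ≤ (ℂ ∙ a)ᗮ := by
    rwa [Submodule.span_singleton_le_iff_mem]
  have heq := Submodule.eq_of_le_of_finrank_eq hle (by rw [finrank_span_singleton hb, hdim])
  have : c ∈ (ℂ ∙ b) := heq ▸ hcK
  exact Submodule.mem_span_singleton.1 this

/-- A finset carrying a fixed-point-free involution has even cardinality. -/
lemma even_card_invol {α : Type*} [DecidableEq α] (ν : α → α) :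
    ∀ s : Finset α, (∀ a ∈ s, ν a ∈ s) → (∀ a ∈ s, ν (ν a) = a) → (∀ a ∈ s, ν a ≠ a) →
    Even s.card := by
  intro s
  induction s using Finset.strongInduction with
  | _ s ih =>
    intro hmem hinv hnefix
    rcases s.eq_empty_or_nonempty with rfl | ⟨a, ha⟩
    · simp
    · have hνa : ν a ∈ s.erase a := Finset.mem_erase.2 ⟨hnefix a ha, hmem a ha⟩
      have hss : ((s.erase a).erase (ν a)) ⊂ s :=
        lt_of_le_of_lt (Finset.erase_subset _ _) (Finset.erase_ssubset ha)
      have hcard : s.card = ((s.erase a).erase (ν a)).card + 2 := by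
        rw [Finset.card_erase_of_mem hνa, Finset.card_erase_of_mem ha]
        have h1 : 1 ≤ s.card := Finset.card_pos.2 ⟨a, ha⟩
        have h2 : 1 ≤ (s.erase a).card := Finset.card_pos.2 ⟨ν a, hνa⟩
        rw [Finset.card_erase_of_mem ha] at h2
        omega
      have hmem' : ∀ b ∈ (s.erase a).erase (ν a), ν b ∈ (s.erase a).erase (ν a) := by
        intro b hb
        obtain ⟨hb1, hb2, hb3⟩ : b ≠ ν a ∧ b ≠ a ∧ b ∈ s := by
          simpa [Finset.mem_erase, and_assoc] using hb
        refine Finset.mem_erase.2 ⟨?_, Finset.mem_erase.2 ⟨?_, hmem b hb3⟩⟩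
        · intro h
          exact hb2 (by rw [← hinv b hb3, h, hinv a ha])
        · intro h
          exact hb1 (by rw [← hinv b hb3, h])
      have := ih _ hss hmem'
        (fun b hb => hinv b (Finset.mem_of_mem_erase (Finset.mem_of_mem_erase hb)))
        (fun b hb => hnefix b (Finset.mem_of_mem_erase (Finset.mem_of_mem_erase hb)))
      rw [hcard]
      obtain ⟨m, hm⟩ := this
      exact ⟨m + 1, by omega⟩

/-- The extendibility construction: if two distinct members of the set share (up to scalar)
the same local state at some party, the set is extendible. -/
lemma no_parallel (n : ℕ)
    (φ : Fin n → Fin (n + 1) → EuclideanSpace ℂ (Fin 2))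
    (hne : ∀ i j, φ i j ≠ 0)
    (hupb : ¬ ∃ χ : Fin n → EuclideanSpace ℂ (Fin 2),
        (∀ i, χ i ≠ 0) ∧ ∀ j : Fin (n + 1), ∃ i, (inner ℂ (χ i) (φ i j) : ℂ) = 0)
    (i : Fin n) (k l : Fin (n + 1)) (hkl : k ≠ l) (t : ℂ) :
    φ i l ≠ t • φ i k := by
  classical
  intro ht
  apply hupb
  have hcard : (({k, l}ᶜ : Finset (Fin (n + 1)))).card = (({i}ᶜ : Finset (Fin n))).card := by
    rw [Finset.card_compl, Finset.card_compl]
    rw [Finset.card_insert_of_notMem (by simpa using hkl), Finset.card_singleton]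
    simp
  let e := Finset.equivOfCardEq hcard
  let χ : Fin n → EuclideanSpace ℂ (Fin 2) := fun i' =>
    if h : i' = i then orthvec (φ i k)
    else orthvec (φ i' ((e.symm ⟨i', by simpa using h⟩ : Fin (n + 1))))
  refine ⟨χ, fun i' => ?_, fun j => ?_⟩
  · by_cases h : i' = i
    · simp only [χ, dif_pos h]
      exact orthvec_ne_zero (hne i k)
    · simp only [χ, dif_neg h]
      exact orthvec_ne_zero (hne _ _)
  · by_cases hjk : j = k
    · refine ⟨i, ?_⟩
      simp only [χ, dif_pos rfl, hjk]
      exact orthvec_inner (φ i k)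
    · by_cases hjl : j = l
      · refine ⟨i, ?_⟩
        simp only [χ, dif_pos rfl, hjl, ht, inner_smul_right]
        rw [orthvec_inner (φ i k)]
        ring
      · have hj : j ∈ ({k, l}ᶜ : Finset (Fin (n + 1))) := by simp [hjk, hjl]
        set w := e ⟨j, hj⟩ with hw
        refine ⟨(w : Fin n), ?_⟩
        have hwne : (w : Fin n) ≠ i := by
          have h2 := w.2
          rw [Finset.mem_compl, Finset.mem_singleton] at h2
          exact h2
        simp only [χ, dif_neg hwne]
        have : (⟨(w : Fin n), by simp [hwne]⟩ : ({i}ᶜ : Finset (Fin n))) = w :=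
          Subtype.ext rfl
        rw [this, hw, Equiv.symm_apply_apply]
        exact orthvec_inner _

/-- For a UPB with n+1 members in (ℂ²)^{⊗n} (φ i j is the factor of state j held
by party i; nonzero factors, mutual orthogonality in some factor, and no nonzero
product vector orthogonal to all members): the orthogonality graph has exactly
one edge of each color at every vertex, and consequently n cannot be even. -/
theorem stmt12 (n : ℕ) (hn : 0 < n)
    (φ : Fin n → Fin (n + 1) → EuclideanSpace ℂ (Fin 2))
    (hne : ∀ i j, φ i j ≠ 0)
    (horth : ∀ j k : Fin (n + 1), j ≠ k → ∃ i, (inner ℂ (φ i j) (φ i k) : ℂ) = 0)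
    (hupb : ¬ ∃ χ : Fin n → EuclideanSpace ℂ (Fin 2),
        (∀ i, χ i ≠ 0) ∧ ∀ j : Fin (n + 1), ∃ i, (inner ℂ (χ i) (φ i j) : ℂ) = 0) :
    (∀ (i : Fin n) (j : Fin (n + 1)),
        ∃! k : Fin (n + 1), k ≠ j ∧ (inner ℂ (φ i j) (φ i k) : ℂ) = 0) ∧
    ¬ Even n := by
  classical
  -- uniqueness of neighbors of a given color
  have uniq : ∀ (i : Fin n) (j k l : Fin (n + 1)), k ≠ j → l ≠ j →
      (inner ℂ (φ i j) (φ i k) : ℂ) = 0 → (inner ℂ (φ i j) (φ i l) : ℂ) = 0 → k = l := by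
    intro i j k l hkj hlj hk hl
    by_contra hkl
    obtain ⟨t, ht⟩ := span_dep (hne i j) (hne i k) hk hl
    exact no_parallel n φ hne hupb i k l hkl t ht.symm
  -- existence of neighbors of every color, by counting
  have exist : ∀ (i : Fin n) (j : Fin (n + 1)),
      ∃ k : Fin (n + 1), k ≠ j ∧ (inner ℂ (φ i j) (φ i k) : ℂ) = 0 := by
    let c : Fin (n + 1) × Fin (n + 1) → Fin n := fun p =>
      if h : p.1 ≠ p.2 then (horth p.1 p.2 h).choose else ⟨0, hn⟩
    have hc : ∀ p : Fin (n + 1) × Fin (n + 1), (hp : p.1 ≠ p.2) →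
        (inner ℂ (φ (c p) p.1) (φ (c p) p.2) : ℂ) = 0 := by
      intro p hp
      simp only [c, dif_pos hp]
      exact (horth p.1 p.2 hp).choose_spec
    set D := (Finset.univ : Finset (Fin (n + 1))).offDiag with hD
    have hmemD : ∀ p ∈ D, p.1 ≠ p.2 := by
      intro p hp
      exact (Finset.mem_offDiag.1 hp).2.2
    have hDcard : D.card = (n + 1) * n := by
      rw [hD, Finset.offDiag_card]
      simp [Nat.mul_sub_one]
      ring_nf
      omega
    have hsum : ∑ i : Fin n, (D.filter (fun p => c p = i)).card = D.card :=
      (Finset.card_eq_sum_card_fiberwise (fun p _ => Finset.mem_univ (c p))).symm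
    have hinj : ∀ i : Fin n, Set.InjOn (Prod.fst : Fin (n + 1) × Fin (n + 1) → Fin (n + 1))
        ↑(D.filter (fun p => c p = i)) := by
      intro i p hp q hq h1
      simp only [Finset.coe_filter, Set.mem_setOf_eq] at hp hq
      obtain ⟨hpD, hpc⟩ := hp
      obtain ⟨hqD, hqc⟩ := hq
      have h2 : p.2 = q.2 := by
        apply uniq i p.1 p.2 q.2 (Ne.symm (hmemD p hpD)) ?_ ?_ ?_
        · rw [h1]; exact Ne.symm (hmemD q hqD)
        · have := hc p (hmemD p hpD); rwa [hpc] at this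
        · have := hc q (hmemD q hqD); rw [hqc] at this; rwa [← h1] at this
      exact Prod.ext h1 h2
    have hbound : ∀ i : Fin n, (D.filter (fun p => c p = i)).card ≤ n + 1 := by
      intro i
      calc (D.filter (fun p => c p = i)).card
          ≤ (Finset.univ : Finset (Fin (n + 1))).card :=
            Finset.card_le_card_of_injOn Prod.fst (fun _ _ => Finset.mem_univ _) (hinj i)
        _ = n + 1 := by simp
    have hall : ∀ i : Fin n, (D.filter (fun p => c p = i)).card = n + 1 := by
      by_contra hcon
      push_neg at hcon
      obtain ⟨i0, hi0⟩ := hcon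
      have h2 : (n + 1) * n < n * (n + 1) := by
        calc (n + 1) * n = D.card := hDcard.symm
          _ = ∑ i : Fin n, (D.filter (fun p => c p = i)).card := hsum.symm
          _ < ∑ _i : Fin n, (n + 1) :=
              Finset.sum_lt_sum (fun i _ => hbound i)
                ⟨i0, Finset.mem_univ _, lt_of_le_of_ne (hbound i0) hi0⟩
          _ = n * (n + 1) := by
              simp [Finset.sum_const, smul_eq_mul]
      rw [Nat.mul_comm] at h2
      exact absurd h2 (lt_irrefl _)
    intro i j
    have himg : (D.filter (fun p => c p = i)).image Prod.fst = Finset.univ := by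
      apply Finset.eq_univ_of_card
      rw [Finset.card_image_of_injOn (hinj i), hall i, Fintype.card_fin]
    have hj : j ∈ (D.filter (fun p => c p = i)).image Prod.fst := by
      rw [himg]; exact Finset.mem_univ j
    obtain ⟨p, hp, hpj⟩ := Finset.mem_image.1 hj
    obtain ⟨hpD, hpc⟩ := Finset.mem_filter.1 hp
    refine ⟨p.2, ?_, ?_⟩
    · rw [← hpj]; exact Ne.symm (hmemD p hpD)
    · have := hc p (hmemD p hpD)
      rw [hpc, hpj] at this
      exact this
  constructor
  · intro i j
    obtain ⟨k, hk1, hk2⟩ := exist i j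
    exact ⟨k, ⟨hk1, hk2⟩, fun l ⟨hl1, hl2⟩ => uniq i j l k hl1 hk1 hl2 hk2⟩
  · -- parity: color-0 neighbors form a fixed-point-free involution on n+1 vertices
    intro hEven
    set i0 : Fin n := ⟨0, hn⟩
    set ν : Fin (n + 1) → Fin (n + 1) := fun j => (exist i0 j).choose with hν
    have hν1 : ∀ j, ν j ≠ j := fun j => ((exist i0 j).choose_spec).1
    have hν2 : ∀ j, (inner ℂ (φ i0 j) (φ i0 (ν j)) : ℂ) = 0 :=
      fun j => ((exist i0 j).choose_spec).2
    have hinv : ∀ j, ν (ν j) = j := by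
      intro j
      apply uniq i0 (ν j) (ν (ν j)) j (hν1 (ν j)) (Ne.symm (hν1 j)) (hν2 (ν j))
      rw [inner_eq_zero_symm]
      exact hν2 j
    have hEv : Even (Finset.univ : Finset (Fin (n + 1))).card :=
      even_card_invol ν Finset.univ (fun a _ => Finset.mem_univ _)
        (fun a _ => hinv a) (fun a _ => hν1 a)
    rw [Finset.card_univ, Fintype.card_fin, Nat.even_add_one] at hEv
    exact hEv hEven
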